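/- For m, n nonnegative integers, not both zero, with m - n + 2 a nonnegative even number, set l = (m-n)/2 + 2 and define F_{m,n}(w_1,...,w_l) = (m!/((m+n)/2 - 1)!) · Σ_{b_1+...+b_l = (m+n)/2 - 1} multinomial((m+n)/2 - 1; b_1,...,b_l)^2 · ∏_i w_i^{2b_i}. Then F_{m+1,n+1} = 2(m+1) · D(F_{m,n}), where D = Σ_i D_{w_i} and D_w sends w^j to w^{j+2}/(j+2) on monomials, extended linearly. -/

import Mathlib

open Finset MvPolynomial

/-- The operator `D_{w_i}` on polynomials: it sends a monomial `w_i^j ⬝ M` to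
`w_i^{j+2}/(j+2) ⬝ M` and is extended linearly. -/
noncomputable def Dw {l : ℕ} (i : Fin l) (p : MvPolynomial (Fin l) ℝ) :
    MvPolynomial (Fin l) ℝ :=
  ∑ d ∈ p.support,
    MvPolynomial.monomial (d + Finsupp.single i 2) (MvPolynomial.coeff d p / ((d i : ℝ) + 2))

/-- The explicit local polynomial `F_{m,n}` in `l = (m-n)/2 + 2` variables,
where `D = (m+n)/2 - 1`:
`F_{m,n} = (m!/D!) ⬝ ∑_{b₁+⋯+b_l = D} multinomial(D; b)² ∏ᵢ wᵢ^{2bᵢ}`. -/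
noncomputable def Fmn (m D l : ℕ) : MvPolynomial (Fin l) ℝ :=
  ((Nat.factorial m : ℝ) / (Nat.factorial D : ℝ)) •
    ∑ b ∈ Finset.Nat.antidiagonalTuple l D,
      ((Nat.multinomial Finset.univ b : ℝ) ^ 2) • ∏ i, (MvPolynomial.X i) ^ (2 * b i)

noncomputable def db {l : ℕ} (b : Fin l → ℕ) : Fin l →₀ ℕ :=
  Finsupp.equivFunOnFinite.symm (fun i => 2 * b i)

lemma db_apply {l : ℕ} (b : Fin l → ℕ) (j : Fin l) : db b j = 2 * b j := rfl

lemma db_injective {l : ℕ} : Function.Injective (db (l := l)) := by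
  intro a b h
  funext j
  have := congrArg (fun f => f j) h
  simpa [db_apply] using Nat.eq_of_mul_eq_mul_left two_pos this

lemma sum_update_univ {l : ℕ} (b : Fin l → ℕ) (i : Fin l) (v : ℕ) :
    (∑ j, Function.update b i v j) = v + ∑ j ∈ Finset.univ.erase i, b j := by
  rw [← Finset.add_sum_erase _ (fun j => Function.update b i v j) (Finset.mem_univ i),
    Function.update_self]
  congr 1
  exact Finset.sum_congr rfl fun j hj => Function.update_of_ne (Finset.ne_of_mem_erase hj) _ _

lemma sum_erase_eq {l : ℕ} (b : Fin l → ℕ) (i : Fin l) :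
    (∑ j, b j) = b i + ∑ j ∈ Finset.univ.erase i, b j :=
  (Finset.add_sum_erase _ _ (Finset.mem_univ i)).symm

lemma prod_update_univ {l : ℕ} (b : Fin l → ℕ) (i : Fin l) (v : ℕ) :
    (∏ j, (Function.update b i v j).factorial) =
      v.factorial * ∏ j ∈ Finset.univ.erase i, (b j).factorial := by
  rw [← Finset.mul_prod_erase _ (fun j => (Function.update b i v j).factorial)
    (Finset.mem_univ i), Function.update_self]
  congr 1
  exact Finset.prod_congr rfl fun j hj => by
    rw [Function.update_of_ne (Finset.ne_of_mem_erase hj)]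

lemma prod_X_pow (l : ℕ) (b : Fin l → ℕ) :
    (∏ i, (MvPolynomial.X i : MvPolynomial (Fin l) ℝ) ^ (2 * b i)) = monomial (db b) 1 := by
  rw [MvPolynomial.monomial_eq, map_one, one_mul, Finsupp.prod]
  refine (Finset.prod_subset (Finset.subset_univ _) ?_).symm
  intro i _ hi
  have h2 : 2 * b i = 0 := by
    have := Finsupp.notMem_support_iff.mp hi
    simpa [db_apply] using this
  show (MvPolynomial.X i : MvPolynomial (Fin l) ℝ) ^ (2 * b i) = 1
  rw [h2, pow_zero]

lemma Fmn_eq (m D l : ℕ) :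
    Fmn m D l = ∑ b ∈ Finset.Nat.antidiagonalTuple l D,
      monomial (db b) ((Nat.factorial m : ℝ) / (Nat.factorial D : ℝ) *
        (Nat.multinomial Finset.univ b : ℝ) ^ 2) := by
  rw [Fmn, Finset.smul_sum]
  refine Finset.sum_congr rfl fun b _ => ?_
  rw [prod_X_pow, smul_monomial, smul_monomial]
  congr 1
  simp [mul_comm]

lemma Dw_sum {l : ℕ} (i : Fin l) (T : Finset (Fin l → ℕ)) (cf : (Fin l → ℕ) → ℝ) :
    Dw i (∑ b ∈ T, monomial (db b) (cf b)) =
      ∑ b ∈ T, monomial (db b + Finsupp.single i 2) (cf b / ((2 * b i : ℝ) + 2)) := by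
  classical
  set p := ∑ b ∈ T, monomial (db b) (cf b) with hp
  have hsupp : p.support ⊆ T.image db := by
    refine (MvPolynomial.support_sum).trans ?_
    intro d hd
    simp only [Finset.mem_biUnion] at hd
    obtain ⟨b, hb, hd⟩ := hd
    have := MvPolynomial.support_monomial_subset hd
    simp only [Finset.mem_singleton] at this
    subst this
    exact Finset.mem_image_of_mem _ hb
  have hcoeff : ∀ b ∈ T, MvPolynomial.coeff (db b) p = cf b := by
    intro b hb
    rw [hp, MvPolynomial.coeff_sum]
    have : ∀ b' ∈ T, MvPolynomial.coeff (db b) (monomial (db b') (cf b')) =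
        if b' = b then cf b' else 0 := by
      intro b' _
      rw [MvPolynomial.coeff_monomial]
      simp [db_injective.eq_iff]
    rw [Finset.sum_congr rfl this, Finset.sum_ite_eq' T b cf, if_pos hb]
  rw [Dw]
  rw [Finset.sum_subset hsupp (by
    intro d _ hd
    rw [MvPolynomial.notMem_support_iff] at hd
    rw [hd]
    simp)]
  rw [Finset.sum_image (fun a _ b _ h => db_injective h)]
  refine Finset.sum_congr rfl fun b hb => ?_
  rw [hcoeff b hb, db_apply]
  push_cast
  ring_nf

lemma mult_succ {l : ℕ} (b : Fin l → ℕ) (i : Fin l) :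
    (b i + 1) * Nat.multinomial Finset.univ (Function.update b i (b i + 1)) =
      ((∑ j, b j) + 1) * Nat.multinomial Finset.univ b := by
  have hP : 0 < ∏ j, (b j).factorial := Finset.prod_pos fun j _ => Nat.factorial_pos _
  apply Nat.eq_of_mul_eq_mul_right hP
  have h1 : (∏ j, (Function.update b i (b i + 1) j).factorial) =
      (b i + 1) * ∏ j, (b j).factorial := by
    rw [prod_update_univ, ← Finset.mul_prod_erase _ (fun j => (b j).factorial)
      (Finset.mem_univ i), Nat.factorial_succ]
    ring
  have h2 : (∑ j, Function.update b i (b i + 1) j) = (∑ j, b j) + 1 := by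
    rw [sum_update_univ]
    rw [sum_erase_eq b i]
    ring
  have s1 := Nat.multinomial_spec Finset.univ (Function.update b i (b i + 1))
  have s2 := Nat.multinomial_spec Finset.univ b
  calc (b i + 1) * Nat.multinomial Finset.univ (Function.update b i (b i + 1)) *
        ∏ j, (b j).factorial
      = (∏ j, (Function.update b i (b i + 1) j).factorial) *
          Nat.multinomial Finset.univ (Function.update b i (b i + 1)) := by rw [h1]; ring
    _ = ((∑ j, b j) + 1).factorial := by rw [s1, h2]
    _ = ((∑ j, b j) + 1) * (∑ j, b j).factorial := Nat.factorial_succ _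
    _ = ((∑ j, b j) + 1) * Nat.multinomial Finset.univ b * ∏ j, (b j).factorial := by
        rw [← s2]; ring

theorem Fmn_recurrence (m n l D : ℕ) (hmn : m + n ≠ 0)
    (hl : 2 * l + n = m + 4) (hD : m + n = 2 * (D + 1)) :
    Fmn (m + 1) (D + 1) l = (2 * (m + 1) : ℝ) • ∑ i, Dw i (Fmn m D l) := by
  classical
  set T := Finset.Nat.antidiagonalTuple l D with hT
  set T' := Finset.Nat.antidiagonalTuple l (D + 1) with hT'
  set cf : (Fin l → ℕ) → ℝ := fun b =>
    (Nat.factorial m : ℝ) / (Nat.factorial D : ℝ) * (Nat.multinomial Finset.univ b : ℝ) ^ 2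
    with hcf
  rw [Fmn_eq m D l]
  have hDw : ∀ i : Fin l, Dw i (∑ b ∈ T, monomial (db b) (cf b)) =
      ∑ b ∈ T, monomial (db b + Finsupp.single i 2) (cf b / ((2 * b i : ℝ) + 2)) :=
    fun i => Dw_sum i T cf
  rw [Finset.sum_congr rfl fun i _ => hDw i]
  have key : ∀ i : Fin l,
      (∑ b ∈ T, monomial (db b + Finsupp.single i 2) (cf b / ((2 * b i : ℝ) + 2))) =
      ∑ c ∈ T'.filter (fun c => c i ≠ 0),
        monomial (db c) (cf (Function.update c i (c i - 1)) / (2 * (c i : ℝ))) := by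
    intro i
    refine Finset.sum_nbij' (fun b => Function.update b i (b i + 1))
      (fun c => Function.update c i (c i - 1)) ?_ ?_ ?_ ?_ ?_
    · intro b hb
      rw [hT, Finset.Nat.mem_antidiagonalTuple] at hb
      refine Finset.mem_filter.mpr ⟨?_, ?_⟩
      · rw [hT', Finset.Nat.mem_antidiagonalTuple]
        show (∑ j, Function.update b i (b i + 1) j) = D + 1
        rw [sum_update_univ]
        rw [sum_erase_eq b i] at hb
        omega
      · show Function.update b i (b i + 1) i ≠ 0
        rw [Function.update_self]
        omega
    · intro c hc
      rw [Finset.mem_filter, hT', Finset.Nat.mem_antidiagonalTuple] at hc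
      rw [hT, Finset.Nat.mem_antidiagonalTuple]
      obtain ⟨hc1, hc2⟩ := hc
      show (∑ j, Function.update c i (c i - 1) j) = D
      rw [sum_update_univ]
      rw [sum_erase_eq c i] at hc1
      omega
    · intro b _
      funext j
      by_cases h : j = i
      · subst h
        simp [Function.update_self]
      · simp [Function.update_of_ne h]
    · intro c hc
      rw [Finset.mem_filter] at hc
      funext j
      by_cases h : j = i
      · subst h
        simp only [Function.update_self]
        omega
      · simp [Function.update_of_ne h]
    · intro b _
      have hexp : db b + Finsupp.single i 2 = db (Function.update b i (b i + 1)) := by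
        ext j
        by_cases h : j = i
        · subst h
          simp only [Finsupp.coe_add, Pi.add_apply, db_apply, Finsupp.single_eq_same,
            Function.update_self]
          omega
        · simp only [Finsupp.coe_add, Pi.add_apply, db_apply, Function.update_of_ne h,
            Finsupp.single_apply, if_neg (Ne.symm h), add_zero]
      have h1 : Function.update (Function.update b i (b i + 1)) i
          (Function.update b i (b i + 1) i - 1) = b := by
        funext j
        by_cases h : j = i
        · subst h; simp [Function.update_self]
        · simp [Function.update_of_ne h]
      have h2 : Function.update b i (b i + 1) i = b i + 1 := Function.update_self _ _ _
      show monomial (db b + Finsupp.single i 2) (cf b / ((2 * b i : ℝ) + 2)) =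
        monomial (db (Function.update b i (b i + 1)))
          (cf (Function.update (Function.update b i (b i + 1)) i
            (Function.update b i (b i + 1) i - 1)) /
              (2 * ((Function.update b i (b i + 1) i : ℕ) : ℝ)))
      rw [hexp, h1, h2]
      congr 1
      push_cast
      ring
  rw [Finset.sum_congr rfl fun i _ => key i]
  have step2 : ∀ i : Fin l,
      (∑ c ∈ T'.filter (fun c => c i ≠ 0),
        monomial (db c) (cf (Function.update c i (c i - 1)) / (2 * (c i : ℝ)))) =
      ∑ c ∈ T', monomial (db c)
        (if c i ≠ 0 then cf (Function.update c i (c i - 1)) / (2 * (c i : ℝ)) else 0) := by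
    intro i
    rw [Finset.sum_filter]
    refine Finset.sum_congr rfl fun c _ => ?_
    split <;> simp
  rw [Finset.sum_congr rfl fun i _ => step2 i]
  rw [Finset.sum_comm]
  rw [Fmn_eq, Finset.smul_sum]
  refine Finset.sum_congr rfl fun c hc => ?_
  rw [← map_sum (monomial (db c)), MvPolynomial.smul_monomial]
  congr 1
  rw [hT', Finset.Nat.mem_antidiagonalTuple] at hc
  have hfac : (Nat.factorial D : ℝ) ≠ 0 := Nat.cast_ne_zero.mpr (Nat.factorial_ne_zero D)
  have hD1 : ((D : ℝ) + 1) ≠ 0 := by positivity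
  have term : ∀ i : Fin l,
      (if c i ≠ 0 then cf (Function.update c i (c i - 1)) / (2 * (c i : ℝ)) else 0) =
      (Nat.factorial m : ℝ) * (Nat.multinomial Finset.univ c : ℝ) ^ 2 * (c i : ℝ) /
        (2 * (Nat.factorial D : ℝ) * ((D : ℝ) + 1) ^ 2) := by
    intro i
    by_cases h : c i = 0
    · simp [h]
    · rw [if_pos h]
      have hms := mult_succ (Function.update c i (c i - 1)) i
      have hup : Function.update (Function.update c i (c i - 1)) i
          (Function.update c i (c i - 1) i + 1) = c := by
        funext j
        by_cases hj : j = i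
        · subst hj; simp only [Function.update_self]; omega
        · simp [Function.update_of_ne hj]
      rw [hup] at hms
      have hsum : (∑ j, Function.update c i (c i - 1) j) = D := by
        rw [sum_update_univ]
        rw [sum_erase_eq c i] at hc
        omega
      rw [hsum] at hms
      have hupdi : Function.update c i (c i - 1) i + 1 = c i := by
        rw [Function.update_self]; omega
      rw [hupdi] at hms
      have hmsR : (c i : ℝ) * (Nat.multinomial Finset.univ c : ℝ)
          = ((D : ℝ) + 1) * (Nat.multinomial Finset.univ (Function.update c i (c i - 1)) : ℝ) := by
        exact_mod_cast congrArg (fun x : ℕ => (x : ℝ)) hms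
      have hci : (c i : ℝ) ≠ 0 := Nat.cast_ne_zero.mpr h
      have hmult : (Nat.multinomial Finset.univ (Function.update c i (c i - 1)) : ℝ)
          = (c i : ℝ) * (Nat.multinomial Finset.univ c : ℝ) / ((D : ℝ) + 1) := by
        field_simp
        linarith [hmsR]
      rw [hcf]
      simp only
      rw [hmult]
      field_simp
  rw [Finset.sum_congr rfl fun i _ => term i]
  rw [← Finset.sum_div, ← Finset.mul_sum]
  have hsumc : (∑ i, (c i : ℝ)) = (D : ℝ) + 1 := by
    exact_mod_cast congrArg (fun x : ℕ => (x : ℝ)) hc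
  rw [hsumc]
  rw [Nat.factorial_succ (D), Nat.factorial_succ m]
  push_cast
  rw [smul_eq_mul]
  field_simp
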